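/- (Disjointness underlying Proposition 3.3.) Let w be a permutation of the positive integers fixing every j > n, let a ≠ a' with a, a' ≤ n, and let u_1 = w·t_{a,n+1}⋯t_{a,n+m} and u_2 = w·t_{a',n+1}⋯t_{a',n+m}, each with every partial product increasing the inversion number by exactly 1. Then for every p ≥ 1, there is no permutation v that can be obtained both from u_1 and from u_2 by a sequence of p transpositions t_{c_i d_i} with c_i ≤ n < d_i, d_i pairwise distinct, c_i weakly increasing, and every partial product increasing the inversion number by exactly 1. -/
import Mathlib

/-- The inversion number of a permutation of `ℕ`. -/
noncomputable def invNum (w : Equiv.Perm ℕ) : ℕ :=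
  {p : ℕ × ℕ | p.1 < p.2 ∧ w p.2 < w p.1}.ncard

def invSet (w : Equiv.Perm ℕ) : Set (ℕ × ℕ) := {p : ℕ × ℕ | p.1 < p.2 ∧ w p.2 < w p.1}

lemma invNum_eq (w : Equiv.Perm ℕ) : invNum w = (invSet w).ncard := rfl

lemma mem_invSet {w : Equiv.Perm ℕ} {x : ℕ × ℕ} :
    x ∈ invSet w ↔ x.1 < x.2 ∧ w x.2 < w x.1 := Iff.rfl

lemma apply_le_of_fix (u : Equiv.Perm ℕ) (N : ℕ) (hu : ∀ x, N < x → u x = x)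
    {x : ℕ} (hx : x ≤ N) : u x ≤ N := by
  by_contra h
  push_neg at h
  have h2 := hu _ h
  have := u.injective h2
  omega

lemma invSet_finite (u : Equiv.Perm ℕ) (N : ℕ) (hu : ∀ x, N < x → u x = x) :
    (invSet u).Finite := by
  apply Set.Finite.subset (Set.finite_Iic (N, N))
  rintro ⟨p, q⟩ ⟨h1, h2⟩
  simp only [invSet, Set.mem_setOf_eq] at h1 h2 ⊢
  have hq : q ≤ N := by
    by_contra hq
    push_neg at hq
    rw [hu q hq] at h2
    rcases le_or_gt p N with hp | hp
    · exact absurd (apply_le_of_fix u N hu hp) (by omega)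
    · rw [hu p hp] at h2; omega
  constructor <;> simp <;> omega

def phiMap (c d : ℕ) (x : ℕ × ℕ) : ℕ × ℕ :=
  if x.1 < c then (x.1, Equiv.swap c d x.2)
  else if d < x.2 then (Equiv.swap c d x.1, x.2) else x

lemma phiMap_lt {c d p q : ℕ} (h : p < c) :
    phiMap c d (p, q) = (p, Equiv.swap c d q) := by simp [phiMap, h]

lemma phiMap_gt {c d p q : ℕ} (h1 : ¬ p < c) (h2 : d < q) :
    phiMap c d (p, q) = (Equiv.swap c d p, q) := by simp [phiMap, h1, h2]

lemma phiMap_id {c d p q : ℕ} (h1 : ¬ p < c) (h2 : ¬ d < q) :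
    phiMap c d (p, q) = (p, q) := by simp [phiMap, h1, h2]

lemma invNum_add_le (u : Equiv.Perm ℕ) (N : ℕ) (hu : ∀ x, N < x → u x = x)
    (c d : ℕ) (hcd : c < d) (hval : u c < u d)
    (E : Set (ℕ × ℕ)) (hEfin : E.Finite)
    (hE1 : ∀ x ∈ E, c ≤ x.1 ∧ x.1 < x.2 ∧ x.2 ≤ d)
    (hE2 : ∀ x ∈ E, u (Equiv.swap c d x.2) < u (Equiv.swap c d x.1))
    (hE3 : ∀ x ∈ E, ¬ (u x.2 < u x.1)) :
    invNum u + E.ncard ≤ invNum (u * Equiv.swap c d) := by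
  classical
  have htc : Equiv.swap c d c = d := Equiv.swap_apply_left c d
  have htd : Equiv.swap c d d = c := Equiv.swap_apply_right c d
  have htother : ∀ x : ℕ, x ≠ c → x ≠ d → Equiv.swap c d x = x := fun x h1 h2 =>
    Equiv.swap_apply_of_ne_of_ne h1 h2
  have htt : ∀ x, Equiv.swap c d (Equiv.swap c d x) = x := fun x => Equiv.swap_apply_self c d x
  have htcases : ∀ x : ℕ, (x ≠ c ∧ x ≠ d ∧ Equiv.swap c d x = x)
      ∨ (x = c ∧ Equiv.swap c d x = d) ∨ (x = d ∧ Equiv.swap c d x = c) := by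
    intro x
    by_cases h1 : x = c
    · subst h1; tauto
    by_cases h2 : x = d
    · subst h2; tauto
    · exact Or.inl ⟨h1, h2, htother x h1 h2⟩
  have hord : ∀ x : ℕ × ℕ, x.1 < x.2 → (phiMap c d x).1 < (phiMap c d x).2 := by
    rintro ⟨p, q⟩ hpq
    simp only at hpq
    by_cases h1 : p < c
    · rw [phiMap_lt h1]
      rcases htcases q with ⟨_, _, h⟩ | ⟨_, h⟩ | ⟨_, h⟩ <;> simp only [h] <;> omega
    by_cases h2 : d < q
    · rw [phiMap_gt h1 h2]
      rcases htcases p with ⟨_, _, h⟩ | ⟨_, h⟩ | ⟨_, h⟩ <;> simp only [h] <;> omega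
    · rw [phiMap_id h1 h2]; exact hpq
  have hΦΦ : ∀ x : ℕ × ℕ, x.1 < x.2 → phiMap c d (phiMap c d x) = x := by
    rintro ⟨p, q⟩ hpq
    simp only at hpq
    by_cases h1 : p < c
    · rw [phiMap_lt h1, phiMap_lt h1, htt]
    by_cases h2 : d < q
    · rw [phiMap_gt h1 h2]
      have h3 : ¬ (Equiv.swap c d p < c) := by
        rcases htcases p with ⟨_, _, h⟩ | ⟨_, h⟩ | ⟨_, h⟩ <;> omega
      rw [phiMap_gt h3 h2, htt]
    · rw [phiMap_id h1 h2, phiMap_id h1 h2]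
  have hmem : ∀ x ∈ invSet u, phiMap c d x ∈ invSet (u * Equiv.swap c d) := by
    rintro ⟨p, q⟩ ⟨hpq, hv⟩
    simp only at hpq hv
    refine ⟨hord _ hpq, ?_⟩
    simp only [Equiv.Perm.mul_apply]
    by_cases h1 : p < c
    · rw [phiMap_lt h1]
      simp only [htt]
      have hp : Equiv.swap c d p = p := htother p (by omega) (by omega)
      rw [hp]; exact hv
    by_cases h2 : d < q
    · rw [phiMap_gt h1 h2]
      simp only [htt]
      have hq : Equiv.swap c d q = q := htother q (by omega) (by omega)
      rw [hq]; exact hv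
    · rw [phiMap_id h1 h2]
      simp only []
      rcases htcases p with ⟨_, _, hp⟩ | ⟨hpc, hp⟩ | ⟨hpd, hp⟩
      · rcases htcases q with ⟨_, _, hq⟩ | ⟨hqc, hq⟩ | ⟨hqd, hq⟩
        · rw [hp, hq]; exact hv
        · omega
        · rw [hp, hq]
          rw [hqd] at hv
          exact lt_trans hval hv
      · rcases htcases q with ⟨_, _, hq⟩ | ⟨hqc, hq⟩ | ⟨hqd, hq⟩
        · rw [hp, hq]
          rw [hpc] at hv
          exact lt_trans hv hval
        · omega
        · rw [hp, hq]; exact hval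
      · omega
  have hEid : ∀ x ∈ E, phiMap c d x = x := by
    rintro ⟨p, q⟩ hx
    obtain ⟨he1, he2, he3⟩ := hE1 _ hx
    simp only at he1 he2 he3
    exact phiMap_id (by omega) (by omega)
  have hEmem : ∀ x ∈ E, x ∈ invSet (u * Equiv.swap c d) := by
    intro x hx
    exact ⟨(hE1 x hx).2.1, by simp only [Equiv.Perm.mul_apply]; exact hE2 x hx⟩
  set S := invSet u ∪ E with hS
  have hSlt : ∀ x ∈ S, x.1 < x.2 := by
    rintro x (hx | hx)
    · exact hx.1
    · exact (hE1 x hx).2.1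
  have hinj : Set.InjOn (phiMap c d) S := by
    intro x hx y hy hxy
    have hx2 := hΦΦ x (hSlt x hx)
    have hy2 := hΦΦ y (hSlt y hy)
    rw [← hx2, ← hy2, hxy]
  have himg : (phiMap c d) '' S ⊆ invSet (u * Equiv.swap c d) := by
    rintro _ ⟨x, hx, rfl⟩
    rcases hx with hx | hx
    · exact hmem x hx
    · rw [hEid x hx]; exact hEmem x hx
  have hfin2 : (invSet (u * Equiv.swap c d)).Finite := by
    apply invSet_finite (u * Equiv.swap c d) (max N (max c d))
    intro x hx
    have h1 : Equiv.swap c d x = x := htother x (by omega) (by omega)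
    simp only [Equiv.Perm.mul_apply, h1]
    exact hu x (by omega)
  have hdisj : Disjoint (invSet u) E := by
    rw [Set.disjoint_left]
    intro x hx hxE
    exact hE3 x hxE hx.2
  calc invNum u + E.ncard = S.ncard := by
        rw [invNum_eq, hS, Set.ncard_union_eq hdisj (invSet_finite u N hu) hEfin]
    _ = ((phiMap c d) '' S).ncard := (Set.ncard_image_of_injOn hinj).symm
    _ ≤ (invSet (u * Equiv.swap c d)).ncard := Set.ncard_le_ncard himg hfin2
    _ = invNum (u * Equiv.swap c d) := rfl

/-- finitely supported -/
def fsupp (u : Equiv.Perm ℕ) : Prop := ∃ N, ∀ x, N < x → u x = x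

lemma fsupp_mul {u v : Equiv.Perm ℕ} (hu : fsupp u) (hv : fsupp v) : fsupp (u * v) := by
  obtain ⟨N, hN⟩ := hu
  obtain ⟨M, hM⟩ := hv
  refine ⟨max N M, fun x hx => ?_⟩
  simp only [Equiv.Perm.mul_apply]
  rw [hM x (by omega), hN x (by omega)]

lemma fsupp_swap (c d : ℕ) : fsupp (Equiv.swap c d) :=
  ⟨max c d, fun x hx => Equiv.swap_apply_of_ne_of_ne (by omega) (by omega)⟩

lemma fsupp_one : fsupp (1 : Equiv.Perm ℕ) := ⟨0, fun x _ => rfl⟩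

lemma fsupp_prod : ∀ (l : List (Equiv.Perm ℕ)), (∀ s ∈ l, fsupp s) → fsupp l.prod := by
  intro l
  induction l with
  | nil => intro _; simpa using fsupp_one
  | cons s l ih =>
    intro h
    rw [List.prod_cons]
    exact fsupp_mul (h s (by simp)) (ih fun x hx => h x (by simp [hx]))

lemma invSet_finite' {u : Equiv.Perm ℕ} (hu : fsupp u) : (invSet u).Finite := by
  obtain ⟨N, hN⟩ := hu
  exact invSet_finite u N hN

/-- The key covering lemma. -/
lemma key_lemma (u : Equiv.Perm ℕ) (hu : fsupp u) (c d : ℕ) (hcd : c < d)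
    (h : invNum (u * Equiv.swap c d) = invNum u + 1) :
    u c < u d ∧ ∀ e, c < e → e < d → u c < u e → u e < u d → False := by
  obtain ⟨N, hN⟩ := hu
  have hne : u c ≠ u d := fun hh => (by omega : c ≠ d) (u.injective hh)
  have hval : u c < u d := by
    rcases lt_or_gt_of_ne hne with hlt | hgt
    · exact hlt
    · exfalso
      set u' := u * Equiv.swap c d with hu'
      obtain ⟨N', hN'⟩ : fsupp u' := fsupp_mul ⟨N, hN⟩ (fsupp_swap c d)
      have hval' : u' c < u' d := by
        simp only [hu', Equiv.Perm.mul_apply, Equiv.swap_apply_left, Equiv.swap_apply_right]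
        exact hgt
      have h2 := invNum_add_le u' N' hN' c d hcd hval' {(c, d)} (Set.finite_singleton _)
        (by rintro x rfl; exact ⟨le_refl _, hcd, le_refl _⟩)
        (by rintro x rfl
            simp only [Equiv.swap_apply_left, Equiv.swap_apply_right]
            exact hval')
        (by rintro x rfl
            simp only [hu', Equiv.Perm.mul_apply, Equiv.swap_apply_left, Equiv.swap_apply_right]
            omega)
      rw [Set.ncard_singleton] at h2
      have h3 : u' * Equiv.swap c d = u := by
        rw [hu', mul_assoc, Equiv.swap_mul_self, mul_one]
      rw [h3, h] at h2
      omega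
  refine ⟨hval, fun e he1 he2 hv1 hv2 => ?_⟩
  have hcard : ({(c, d), (c, e), (e, d)} : Set (ℕ × ℕ)).ncard = 3 := by
    rw [Set.ncard_insert_of_notMem (by simp; omega)
        ((Set.finite_singleton _).insert _),
      Set.ncard_insert_of_notMem (by simp; omega) (Set.finite_singleton _),
      Set.ncard_singleton]
  have h2 := invNum_add_le u N hN c d hcd hval {(c, d), (c, e), (e, d)}
    (((Set.finite_singleton _).insert _).insert _)
    (by rintro x (rfl | rfl | rfl) <;> simp <;> omega)
    (by
      have hte : Equiv.swap c d e = e := Equiv.swap_apply_of_ne_of_ne (by omega) (by omega)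
      rintro x (rfl | rfl | rfl) <;>
        simp only [Equiv.swap_apply_left, Equiv.swap_apply_right, hte] <;> omega)
    (by
      rintro x (rfl | rfl | rfl) <;> simp <;> omega)
  rw [hcard, h] at h2
  omega

def chainU (p : ℕ) (u : Equiv.Perm ℕ) (c d : Fin p → ℕ) (i : ℕ) : Equiv.Perm ℕ :=
  u * ((List.ofFn fun j : Fin p => Equiv.swap (c j) (d j)).take i).prod

lemma chainU_zero (p : ℕ) (u : Equiv.Perm ℕ) (c d : Fin p → ℕ) :
    chainU p u c d 0 = u := by simp [chainU]

lemma chainU_succ (p : ℕ) (u : Equiv.Perm ℕ) (c d : Fin p → ℕ) (i : ℕ) (hi : i < p) :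
    chainU p u c d (i + 1) = chainU p u c d i * Equiv.swap (c ⟨i, hi⟩) (d ⟨i, hi⟩) := by
  unfold chainU
  have hlen : i < (List.ofFn fun j : Fin p => Equiv.swap (c j) (d j)).length := by simp [hi]
  rw [List.take_succ, List.getElem?_eq_getElem hlen]
  simp only [List.getElem_ofFn, Option.toList_some]
  rw [List.prod_append, List.prod_cons, List.prod_nil, mul_one, mul_assoc]

lemma chainU_apply (p : ℕ) (u : Equiv.Perm ℕ) (c d : Fin p → ℕ) (i : ℕ) (hi : i < p) (x : ℕ) :
    chainU p u c d (i + 1) x = chainU p u c d i (Equiv.swap (c ⟨i, hi⟩) (d ⟨i, hi⟩) x) := by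
  rw [chainU_succ p u c d i hi]; rfl

lemma chainU_fsupp (p : ℕ) (u : Equiv.Perm ℕ) (c d : Fin p → ℕ) (i : ℕ) (hu : fsupp u) :
    fsupp (chainU p u c d i) := by
  apply fsupp_mul hu
  apply fsupp_prod
  intro s hs
  have hs2 := List.mem_of_mem_take hs
  rw [List.mem_ofFn] at hs2
  obtain ⟨j, rfl⟩ := hs2
  exact fsupp_swap _ _

lemma chainU_last (p : ℕ) (u v : Equiv.Perm ℕ) (c d : Fin p → ℕ)
    (hv : v = u * (List.ofFn fun j : Fin p => Equiv.swap (c j) (d j)).prod) :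
    v = chainU p u c d p := by
  rw [hv]
  unfold chainU
  rw [List.take_of_length_le (by simp)]

lemma chainU_invNum_succ (p : ℕ) (u : Equiv.Perm ℕ) (c d : Fin p → ℕ)
    (hlen : ∀ i : Fin p,
      invNum (u * ((List.ofFn fun j : Fin p => Equiv.swap (c j) (d j)).take ((i : ℕ) + 1)).prod)
        = invNum u + ((i : ℕ) + 1))
    (i : ℕ) (hi : i < p) :
    invNum (chainU p u c d (i + 1)) = invNum (chainU p u c d i) + 1 := by
  cases i with
  | zero =>
    have h1 : invNum (chainU p u c d 1) = invNum u + 1 := hlen ⟨0, hi⟩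
    rw [h1, chainU_zero]
  | succ k =>
    have h1 : invNum (chainU p u c d (k + 1 + 1)) = invNum u + (k + 1 + 1) := hlen ⟨k + 1, hi⟩
    have h2 : invNum (chainU p u c d (k + 1)) = invNum u + (k + 1) := hlen ⟨k, by omega⟩
    omega

/-- per-step covering facts -/
lemma chainU_step (n p : ℕ) (u : Equiv.Perm ℕ) (hu : fsupp u) (c d : Fin p → ℕ)
    (hbound : ∀ i, 1 ≤ c i ∧ c i ≤ n ∧ n < d i)
    (hlen : ∀ i : Fin p,
      invNum (u * ((List.ofFn fun j : Fin p => Equiv.swap (c j) (d j)).take ((i : ℕ) + 1)).prod)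
        = invNum u + ((i : ℕ) + 1))
    (i : ℕ) (hi : i < p) :
    chainU p u c d i (c ⟨i, hi⟩) < chainU p u c d i (d ⟨i, hi⟩) ∧
      ∀ e, c ⟨i, hi⟩ < e → e < d ⟨i, hi⟩ →
        chainU p u c d i (c ⟨i, hi⟩) < chainU p u c d i e →
        chainU p u c d i e < chainU p u c d i (d ⟨i, hi⟩) → False := by
  have hcd : c ⟨i, hi⟩ < d ⟨i, hi⟩ := by
    have := hbound ⟨i, hi⟩; omega
  apply key_lemma (chainU p u c d i) (chainU_fsupp p u c d i hu) _ _ hcd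
  rw [← chainU_succ p u c d i hi]
  exact chainU_invNum_succ p u c d hlen i hi

/-- position of the value `u x₀` along a chain -/
lemma chainU_track (n p : ℕ) (u : Equiv.Perm ℕ) (c d : Fin p → ℕ)
    (hbound : ∀ i, 1 ≤ c i ∧ c i ≤ n ∧ n < d i) (hdinj : Function.Injective d)
    (x₀ : ℕ) (hx₀ : x₀ ≤ n) :
    ∀ i, i ≤ p → ∃ x, chainU p u c d i x = u x₀ ∧
      (x = x₀ ∨ ∃ j : Fin p, (j : ℕ) < i ∧ x = d j) := by
  intro i
  induction i with
  | zero => intro _; exact ⟨x₀, by rw [chainU_zero], Or.inl rfl⟩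
  | succ k ih =>
    intro hk
    have hkp : k < p := by omega
    obtain ⟨x, hx, hcase⟩ := ih (by omega)
    refine ⟨Equiv.swap (c ⟨k, hkp⟩) (d ⟨k, hkp⟩) x, ?_, ?_⟩
    · rw [chainU_apply p u c d k hkp, Equiv.swap_apply_self, hx]
    · rcases hcase with rfl | ⟨j, hj, rfl⟩
      · by_cases hxc : x = c ⟨k, hkp⟩
        · right
          refine ⟨⟨k, hkp⟩, by simp, ?_⟩
          rw [hxc, Equiv.swap_apply_left]
        · left
          have hxd : x ≠ d ⟨k, hkp⟩ := by
            have := hbound ⟨k, hkp⟩; omega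
          rw [Equiv.swap_apply_of_ne_of_ne hxc hxd]
      · right
        refine ⟨j, by omega, ?_⟩
        have h1 : d j ≠ c ⟨k, hkp⟩ := by
          have := hbound ⟨k, hkp⟩
          have := hbound j
          omega
        have h2 : d j ≠ d ⟨k, hkp⟩ := by
          intro hh
          have := hdinj hh
          rw [this] at hj
          simp at hj
        rw [Equiv.swap_apply_of_ne_of_ne h1 h2]

/-- value at a fixed small position is nondecreasing -/
lemma chainU_mono (n p : ℕ) (u : Equiv.Perm ℕ) (hu : fsupp u) (c d : Fin p → ℕ)
    (hbound : ∀ i, 1 ≤ c i ∧ c i ≤ n ∧ n < d i)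
    (hlen : ∀ i : Fin p,
      invNum (u * ((List.ofFn fun j : Fin p => Equiv.swap (c j) (d j)).take ((i : ℕ) + 1)).prod)
        = invNum u + ((i : ℕ) + 1))
    (x₀ : ℕ) (hx₀ : x₀ ≤ n) :
    ∀ i, i ≤ p → u x₀ ≤ chainU p u c d i x₀ := by
  intro i
  induction i with
  | zero => intro _; rw [chainU_zero]
  | succ k ih =>
    intro hk
    have hkp : k < p := by omega
    refine le_trans (ih (by omega)) ?_
    rw [chainU_apply p u c d k hkp]
    by_cases hxc : x₀ = c ⟨k, hkp⟩
    · rw [hxc, Equiv.swap_apply_left]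
      exact le_of_lt (by rw [← hxc]; rw [hxc]; exact (chainU_step n p u hu c d hbound hlen k hkp).1)
    · have hxd : x₀ ≠ d ⟨k, hkp⟩ := by
        have := hbound ⟨k, hkp⟩; omega
      rw [Equiv.swap_apply_of_ne_of_ne hxc hxd]

/-- untouched positions -/
lemma chainU_untouched (n p : ℕ) (u : Equiv.Perm ℕ) (c d : Fin p → ℕ)
    (hbound : ∀ i, 1 ≤ c i ∧ c i ≤ n ∧ n < d i)
    (x₀ : ℕ) (hx₀ : x₀ ≤ n) :
    ∀ i, i ≤ p → (∀ j : Fin p, (j : ℕ) < i → c j ≠ x₀) → chainU p u c d i x₀ = u x₀ := by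
  intro i
  induction i with
  | zero => intro _ _; rw [chainU_zero]
  | succ k ih =>
    intro hk hc
    have hkp : k < p := by omega
    rw [chainU_apply p u c d k hkp]
    have h1 : x₀ ≠ c ⟨k, hkp⟩ := by
      have := hc ⟨k, hkp⟩ (by simp)
      omega
    have h2 : x₀ ≠ d ⟨k, hkp⟩ := by
      have := hbound ⟨k, hkp⟩; omega
    rw [Equiv.swap_apply_of_ne_of_ne h1 h2]
    exact ih (by omega) (fun j hj => hc j (by omega))

lemma crossing (f : ℕ → ℕ) (B : ℕ) : ∀ p, f 0 ≤ B → B < f p →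
    ∃ i, i < p ∧ f i ≤ B ∧ B < f (i + 1) := by
  intro p
  induction p with
  | zero => intro h1 h2; omega
  | succ q ih =>
    intro h1 h2
    by_cases hq : B < f q
    · obtain ⟨i, hi1, hi2, hi3⟩ := ih h1 hq
      exact ⟨i, by omega, hi2, hi3⟩
    · exact ⟨q, by omega, by omega, h2⟩

/-- `PieriChain n p u v` : `v` is obtained from `u` by a sequence of `p`
transpositions `t_{cᵢdᵢ}` with `1 ≤ cᵢ ≤ n < dᵢ`, `dᵢ` pairwise distinct, `cᵢ`
weakly increasing, each step increasing the inversion number by exactly `1`. -/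
def PieriChain (n p : ℕ) (u v : Equiv.Perm ℕ) : Prop :=
  ∃ c d : Fin p → ℕ,
    (∀ i j : Fin p, i ≤ j → c i ≤ c j) ∧
    (∀ i, 1 ≤ c i ∧ c i ≤ n ∧ n < d i) ∧
    Function.Injective d ∧
    (∀ i : Fin p,
      invNum (u * ((List.ofFn fun j : Fin p => Equiv.swap (c j) (d j)).take ((i : ℕ) + 1)).prod)
        = invNum u + ((i : ℕ) + 1)) ∧
    v = u * (List.ofFn fun j : Fin p => Equiv.swap (c j) (d j)).prod

lemma main_aux (n m p : ℕ) (hm : 0 < m) (a a' : ℕ) (han : a ≤ n) (ha'n : a' ≤ n)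
    (haa' : a < a') (u₁ u₂ v : Equiv.Perm ℕ) (hfs1 : fsupp u₁) (hfs2 : fsupp u₂)
    (h1a : u₁ a = n + m) (h2a' : u₂ a' = n + m) (h2a : u₂ a < n + m)
    (hc1 : PieriChain n p u₁ v) (hc2 : PieriChain n p u₂ v) : False := by
  obtain ⟨c, d, hcm, hcd, hdinj, hlen, hv⟩ := hc1
  obtain ⟨c', d', hcm', hcd', hdinj', hlen', hv'⟩ := hc2
  have hvU : v = chainU p u₁ c d p := chainU_last p u₁ v c d hv
  have hvU' : v = chainU p u₂ c' d' p := chainU_last p u₂ v c' d' hv'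
  -- tracking the value n+m in chain 2 (it starts at position a')
  have inv2 : ∀ i, i ≤ p → ∃ x, chainU p u₂ c' d' i x = n + m ∧
      (x = a' ∨ ∃ j : Fin p, (j : ℕ) < i ∧ x = d' j) := by
    intro i hi
    obtain ⟨x, hx, hcase⟩ := chainU_track n p u₂ c' d' hcd' hdinj' a' ha'n i hi
    exact ⟨x, by rw [hx, h2a'], hcase⟩
  -- v a ≠ n + m
  have hva_ne : chainU p u₂ c' d' p a ≠ n + m := by
    obtain ⟨x, hx, hcase⟩ := inv2 p (le_refl p)
    intro hh
    have hax : a = x := (chainU p u₂ c' d' p).injective (by rw [hx, hh])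
    rcases hcase with rfl | ⟨j, _, rfl⟩
    · omega
    · have := hcd' j; omega
  -- v a ≥ n + m via chain 1
  have hva_ge : n + m ≤ chainU p u₂ c' d' p a := by
    have h := chainU_mono n p u₁ hfs1 c d hcd hlen a han p (le_refl p)
    rw [h1a] at h
    rw [← hvU', hvU]
    exact h
  have hva : n + m < chainU p u₂ c' d' p a := lt_of_le_of_ne hva_ge (Ne.symm hva_ne)
  -- crossing step in chain 2
  obtain ⟨i, hi, hle, hgt⟩ := crossing (fun i => chainU p u₂ c' d' i a) (n + m) p
    (by show chainU p u₂ c' d' 0 a ≤ n + m; rw [chainU_zero]; omega) hva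
  -- the step must move position a
  have hca : a = c' ⟨i, hi⟩ := by
    by_contra hne
    have hnd : a ≠ d' ⟨i, hi⟩ := by have := hcd' ⟨i, hi⟩; omega
    rw [chainU_apply p u₂ c' d' i hi, Equiv.swap_apply_of_ne_of_ne hne hnd] at hgt
    omega
  -- value at a at time i is < n+m
  have hlt : chainU p u₂ c' d' i a < n + m := by
    rcases lt_or_eq_of_le hle with h | h
    · exact h
    · exfalso
      obtain ⟨x, hx, hcase⟩ := inv2 i (le_of_lt hi)
      have hax : a = x := (chainU p u₂ c' d' i).injective (by rw [hx, h])
      rcases hcase with rfl | ⟨j, _, rfl⟩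
      · omega
      · have := hcd' j; omega
  -- value at a' at time i is still n+m
  have ha'val : chainU p u₂ c' d' i a' = n + m := by
    rw [chainU_untouched n p u₂ c' d' hcd' a' ha'n i (le_of_lt hi) ?_, h2a']
    intro j hj
    have hji : j ≤ (⟨i, hi⟩ : Fin p) := by
      rw [Fin.le_def]; simpa using le_of_lt hj
    have := hcm' j ⟨i, hi⟩ hji
    omega
  -- value at d' i at time i is the new value at a, which is > n+m
  have hdval : chainU p u₂ c' d' i (d' ⟨i, hi⟩) = chainU p u₂ c' d' (i + 1) a := by
    rw [chainU_apply p u₂ c' d' i hi, hca, Equiv.swap_apply_left]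
  -- contradiction with the covering condition at step i, e = a'
  have hstep := (chainU_step n p u₂ hfs2 c' d' hcd' hlen' i hi).2 a'
  apply hstep
  · omega
  · have := hcd' ⟨i, hi⟩; omega
  · rw [← hca, ha'val]; exact hlt
  · rw [ha'val, hdval]; exact hgt

lemma swapProd_fix (b n : ℕ) : ∀ (m : ℕ) (x : ℕ), x ≠ b → (∀ j, j < m → x ≠ n + 1 + j) →
    (List.ofFn fun j : Fin m => Equiv.swap b (n + 1 + (j : ℕ))).prod x = x := by
  intro m
  induction m with
  | zero => intro x _ _; simp
  | succ k ih =>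
    intro x hxb hxj
    rw [List.ofFn_succ']
    simp only [List.concat_eq_append, List.prod_append, List.prod_cons, List.prod_nil, mul_one]
    have h1 : Equiv.swap b (n + 1 + k) x = x :=
      Equiv.swap_apply_of_ne_of_ne hxb (hxj k (by omega))
    rw [Equiv.Perm.mul_apply]
    simp only [Fin.coe_castSucc, Fin.val_last] at *
    rw [h1]
    exact ih x hxb (fun j hj => hxj j (by omega))

lemma swapProd_special (b n : ℕ) (m : ℕ) (hm : 0 < m) (hb : b ≤ n) :
    (List.ofFn fun j : Fin m => Equiv.swap b (n + 1 + (j : ℕ))).prod b = n + m := by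
  cases m with
  | zero => omega
  | succ k =>
    rw [List.ofFn_succ']
    simp only [List.concat_eq_append, List.prod_append, List.prod_cons, List.prod_nil, mul_one]
    rw [Equiv.Perm.mul_apply]
    simp only [Fin.coe_castSucc, Fin.val_last]
    rw [Equiv.swap_apply_left]
    rw [swapProd_fix b n k (n + 1 + k) (by omega) (by intro j hj; omega)]
    omega

lemma fsupp_swapProd (b n m : ℕ) :
    fsupp (List.ofFn fun j : Fin m => Equiv.swap b (n + 1 + (j : ℕ))).prod := by
  apply fsupp_prod
  intro s hs
  rw [List.mem_ofFn] at hs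
  obtain ⟨j, rfl⟩ := hs
  exact fsupp_swap _ _

/-- Disjointness underlying Proposition 3.3: with `w` fixing every `j > n`,
`a ≠ a'`, `u₁ = w·t_{a,n+1}⋯t_{a,n+m}` and `u₂ = w·t_{a',n+1}⋯t_{a',n+m}` (each
partial product increasing the length by one), no permutation `v` is reachable
from both `u₁` and `u₂` by Pieri chains of the same length `p ≥ 1`. -/
theorem stmt_12 (n m : ℕ) (hm : 0 < m) (a a' : ℕ)
    (h1a : 1 ≤ a) (han : a ≤ n) (h1a' : 1 ≤ a') (ha'n : a' ≤ n) (hne : a ≠ a')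
    (w u₁ u₂ : Equiv.Perm ℕ) (hw0 : w 0 = 0) (hfix : ∀ j, n < j → w j = j)
    (hu₁ : u₁ = w * (List.ofFn fun j : Fin m => Equiv.swap a (n + 1 + (j : ℕ))).prod)
    (hlen₁ : ∀ i : Fin m,
      invNum (w * ((List.ofFn fun j : Fin m => Equiv.swap a (n + 1 + (j : ℕ))).take ((i : ℕ) + 1)).prod)
        = invNum w + ((i : ℕ) + 1))
    (hu₂ : u₂ = w * (List.ofFn fun j : Fin m => Equiv.swap a' (n + 1 + (j : ℕ))).prod)
    (hlen₂ : ∀ i : Fin m,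
      invNum (w * ((List.ofFn fun j : Fin m => Equiv.swap a' (n + 1 + (j : ℕ))).take ((i : ℕ) + 1)).prod)
        = invNum w + ((i : ℕ) + 1)) :
    ∀ p, 1 ≤ p → ¬ ∃ v, PieriChain n p u₁ v ∧ PieriChain n p u₂ v := by
  intro p _ h
  obtain ⟨v, hch1, hch2⟩ := h
  have hfsw : fsupp w := ⟨n, hfix⟩
  have hfs1 : fsupp u₁ := by rw [hu₁]; exact fsupp_mul hfsw (fsupp_swapProd a n m)
  have hfs2 : fsupp u₂ := by rw [hu₂]; exact fsupp_mul hfsw (fsupp_swapProd a' n m)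
  have hu₁a : u₁ a = n + m := by
    rw [hu₁, Equiv.Perm.mul_apply, swapProd_special a n m hm han]
    exact hfix (n + m) (by omega)
  have hu₂a' : u₂ a' = n + m := by
    rw [hu₂, Equiv.Perm.mul_apply, swapProd_special a' n m hm ha'n]
    exact hfix (n + m) (by omega)
  have hu₁a' : u₁ a' = w a' := by
    rw [hu₁, Equiv.Perm.mul_apply,
      swapProd_fix a n m a' (Ne.symm hne) (by intro j hj; omega)]
  have hu₂a : u₂ a = w a := by
    rw [hu₂, Equiv.Perm.mul_apply,
      swapProd_fix a' n m a hne (by intro j hj; omega)]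
  have hwa : w a ≤ n := apply_le_of_fix w n hfix han
  have hwa' : w a' ≤ n := apply_le_of_fix w n hfix ha'n
  rcases lt_trichotomy a a' with hlt | heq | hgt
  · exact main_aux n m p hm a a' han ha'n hlt u₁ u₂ v hfs1 hfs2 hu₁a hu₂a'
      (by rw [hu₂a]; omega) hch1 hch2
  · exact hne heq
  · exact main_aux n m p hm a' a ha'n han hgt u₂ u₁ v hfs2 hfs1 hu₂a' hu₁a
      (by rw [hu₁a']; omega) hch2 hch1
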